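/- For every i ≥ 2 and n = 2^i, there exists a solution w to the 2-out-of-n picture-hanging puzzle whose length satisfies 3 · |w| ≤ 8 · 6^i − 12 · 4^i (that is, |w| ≤ (8/3) · n^{log₂ 6} − 4 · n²). -/

import Mathlib

/-- The removal homomorphism: kills the generators with index in `S`. -/
def kill {n : ℕ} (S : Finset (Fin n)) : FreeGroup (Fin n) →* FreeGroup (Fin n) :=
  FreeGroup.lift fun i => if i ∈ S then 1 else FreeGroup.of i

/-- `w` is a solution to the `k`-out-of-`n` picture-hanging puzzle (Demaine convention). -/
def IsSolution {n : ℕ} (k : ℕ) (w : FreeGroup (Fin n)) : Prop :=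
  ∀ S : Finset (Fin n),
    (k ≤ S.card → kill S w = 1) ∧ (S.card < k → kill S w ≠ 1)

namespace PictureHang

open FreeGroup

variable {α : Type*} {β : Type*} [DecidableEq α] [DecidableEq β]

/-- Generic removal homomorphism over any index type. -/
def killg (S : Finset α) : FreeGroup α →* FreeGroup α :=
  FreeGroup.lift fun i => if i ∈ S then 1 else FreeGroup.of i

@[simp] lemma killg_of (S : Finset α) (a : α) :
    killg S (FreeGroup.of a) = if a ∈ S then 1 else FreeGroup.of a :=
  FreeGroup.lift_apply_of

lemma killg_empty (x : FreeGroup α) : killg (∅ : Finset α) x = x := by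
  have h : killg (∅ : Finset α) = MonoidHom.id (FreeGroup α) := by
    apply FreeGroup.ext_hom; intro a; simp
  rw [h]; rfl

/-- The non-cancellation relation on letters. -/
def RR : (α × Bool) → (α × Bool) → Prop := fun a b => ¬(a.1 = b.1 ∧ a.2 = !b.2)

lemma reduce_eq_self {L : List (α × Bool)} (h : L.IsChain RR) : FreeGroup.reduce L = L := by
  induction L with
  | nil => rfl
  | cons x t ih =>
    rw [FreeGroup.reduce.cons, ih h.tail]
    cases t with
    | nil => rfl
    | cons hd tl =>
      have hr : RR x hd := (List.isChain_cons_cons.mp h).1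
      simp only [RR] at hr
      simp [hr]

lemma chain'_reduce (L : List (α × Bool)) : (FreeGroup.reduce L).IsChain RR := by
  induction L with
  | nil => simp
  | cons x t ih =>
    rw [FreeGroup.reduce.cons]
    cases h : FreeGroup.reduce t with
    | nil => simp
    | cons hd tl =>
      rw [h] at ih
      by_cases hc : x.1 = hd.1 ∧ x.2 = !hd.2
      · simpa [hc] using ih.tail
      · simpa [hc] using List.isChain_cons_cons.mpr ⟨hc, ih⟩

lemma chain'_toWord (x : FreeGroup α) : x.toWord.IsChain RR := by
  rw [← FreeGroup.reduce_toWord]; exact chain'_reduce _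

lemma toWord_mul' (x y : FreeGroup α)
    (h : ∀ a ∈ x.toWord.getLast?, ∀ b ∈ y.toWord.head?, a.1 ≠ b.1) :
    (x * y).toWord = x.toWord ++ y.toWord := by
  conv_lhs => rw [← FreeGroup.mk_toWord (x := x), ← FreeGroup.mk_toWord (x := y)]
  rw [FreeGroup.mul_mk, FreeGroup.toWord_mk]
  exact reduce_eq_self (List.isChain_append.mpr
    ⟨chain'_toWord x, chain'_toWord y, fun a ha b hb hab => h a ha b hb hab.1⟩)

lemma toWord_map {f : α → β} (hf : Function.Injective f) (x : FreeGroup α) :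
    (FreeGroup.map f x).toWord = x.toWord.map (fun p => (f p.1, p.2)) := by
  conv_lhs => rw [← FreeGroup.mk_toWord (x := x)]
  rw [FreeGroup.map.mk, FreeGroup.toWord_mk]
  refine reduce_eq_self (List.isChain_map_of_isChain _ ?_ (chain'_toWord x))
  rintro a b hab ⟨h1, h2⟩
  exact hab ⟨hf h1, h2⟩

lemma norm_map {f : α → β} (hf : Function.Injective f) (x : FreeGroup α) :
    (FreeGroup.map f x).norm = x.norm := by
  unfold FreeGroup.norm
  rw [toWord_map hf, List.length_map]

lemma map_ne_one {f : α → β} (hf : Function.Injective f) {x : FreeGroup α} (hx : x ≠ 1) :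
    FreeGroup.map f x ≠ 1 := by
  intro h
  apply hx
  rw [← FreeGroup.toWord_eq_nil_iff] at h ⊢
  rw [toWord_map hf] at h
  exact List.map_eq_nil_iff.mp h

section Sum

variable {x y : FreeGroup (α ⊕ β)}

/-- A nontrivial element all of whose letters are left letters. -/
def PL (x : FreeGroup (α ⊕ β)) : Prop := x ≠ 1 ∧ ∀ p ∈ x.toWord, (p.1).isLeft

/-- A nontrivial element all of whose letters are right letters. -/
def PR (x : FreeGroup (α ⊕ β)) : Prop := x ≠ 1 ∧ ∀ p ∈ x.toWord, (p.1).isRight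

lemma PL_inl {z : FreeGroup α} (hz : z ≠ 1) :
    PL (FreeGroup.map Sum.inl z : FreeGroup (α ⊕ β)) := by
  refine ⟨map_ne_one Sum.inl_injective hz, ?_⟩
  rw [toWord_map Sum.inl_injective]
  rintro p hp
  obtain ⟨q, -, rfl⟩ := List.mem_map.mp hp
  rfl

lemma PR_inr {z : FreeGroup β} (hz : z ≠ 1) :
    PR (FreeGroup.map Sum.inr z : FreeGroup (α ⊕ β)) := by
  refine ⟨map_ne_one Sum.inr_injective hz, ?_⟩
  rw [toWord_map Sum.inr_injective]
  rintro p hp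
  obtain ⟨q, -, rfl⟩ := List.mem_map.mp hp
  rfl

lemma stepLR (hx : x ≠ 1) (hxl : ∀ p ∈ x.toWord.getLast?, (p.1).isLeft) (hy : PR y) :
    x * y ≠ 1 ∧ ∀ p ∈ (x * y).toWord.getLast?, (p.1).isRight := by
  have hyw : y.toWord ≠ [] := fun h => hy.1 (FreeGroup.toWord_eq_nil_iff.mp h)
  have heq : (x * y).toWord = x.toWord ++ y.toWord := by
    refine toWord_mul' x y ?_
    intro a ha b hb hab
    have h1 : a.1.isLeft := hxl a ha
    have h2 : b.1.isRight := hy.2 b (List.mem_of_mem_head? hb)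
    rw [hab] at h1
    obtain ⟨c, hc⟩ := Sum.isLeft_iff.mp h1
    obtain ⟨d, hd⟩ := Sum.isRight_iff.mp h2
    rw [hc] at hd
    simp at hd
  constructor
  · intro h
    have h0 := FreeGroup.toWord_eq_nil_iff.mpr h
    rw [heq] at h0
    exact hyw (List.append_eq_nil_iff.mp h0).2
  · intro p hp
    rw [heq, List.getLast?_append_of_ne_nil _ hyw] at hp
    exact hy.2 p (List.mem_of_mem_getLast? hp)

lemma stepRL (hx : x ≠ 1) (hxl : ∀ p ∈ x.toWord.getLast?, (p.1).isRight) (hy : PL y) :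
    x * y ≠ 1 ∧ ∀ p ∈ (x * y).toWord.getLast?, (p.1).isLeft := by
  have hyw : y.toWord ≠ [] := fun h => hy.1 (FreeGroup.toWord_eq_nil_iff.mp h)
  have heq : (x * y).toWord = x.toWord ++ y.toWord := by
    refine toWord_mul' x y ?_
    intro a ha b hb hab
    have h1 : a.1.isRight := hxl a ha
    have h2 : b.1.isLeft := hy.2 b (List.mem_of_mem_head? hb)
    rw [hab] at h1
    obtain ⟨c, hc⟩ := Sum.isRight_iff.mp h1
    obtain ⟨d, hd⟩ := Sum.isLeft_iff.mp h2
    rw [hc] at hd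
    simp at hd
  constructor
  · intro h
    have h0 := FreeGroup.toWord_eq_nil_iff.mpr h
    rw [heq] at h0
    exact hyw (List.append_eq_nil_iff.mp h0).2
  · intro p hp
    rw [heq, List.getLast?_append_of_ne_nil _ hyw] at hp
    exact hy.2 p (List.mem_of_mem_getLast? hp)

lemma alt4 {a b c d : FreeGroup (α ⊕ β)} (ha : PL a) (hb : PR b) (hc : PL c) (hd : PR d) :
    a * b * c * d ≠ 1 := by
  have h0 : ∀ p ∈ a.toWord.getLast?, (p.1).isLeft :=
    fun p hp => ha.2 p (List.mem_of_mem_getLast? hp)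
  have h1 := stepLR ha.1 h0 hb
  have h2 := stepRL h1.1 h1.2 hc
  have h3 := stepLR h2.1 h2.2 hd
  exact h3.1

lemma alt8 {a b c d e f g h : FreeGroup (α ⊕ β)}
    (ha : PL a) (hb : PR b) (hc : PL c) (hd : PR d)
    (he : PL e) (hf : PR f) (hg : PL g) (hh : PR h) :
    a * b * c * d * e * f * g * h ≠ 1 := by
  have h0 : ∀ p ∈ a.toWord.getLast?, (p.1).isLeft :=
    fun p hp => ha.2 p (List.mem_of_mem_getLast? hp)
  have h1 := stepLR ha.1 h0 hb
  have h2 := stepRL h1.1 h1.2 hc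
  have h3 := stepLR h2.1 h2.2 hd
  have h4 := stepRL h3.1 h3.2 he
  have h5 := stepLR h4.1 h4.2 hf
  have h6 := stepRL h5.1 h5.2 hg
  have h7 := stepLR h6.1 h6.2 hh
  exact h7.1

end Sum

lemma killg_map_inl (S : Finset (α ⊕ β)) (z : FreeGroup α) :
    killg S (FreeGroup.map Sum.inl z) = FreeGroup.map Sum.inl (killg S.toLeft z) := by
  have h : (killg S).comp (FreeGroup.map Sum.inl)
      = (FreeGroup.map (Sum.inl : α → α ⊕ β)).comp (killg S.toLeft) := by
    apply FreeGroup.ext_hom; intro a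
    simp [apply_ite, FreeGroup.map.of]
  exact DFunLike.congr_fun h z

lemma killg_map_inr (S : Finset (α ⊕ β)) (z : FreeGroup β) :
    killg S (FreeGroup.map Sum.inr z) = FreeGroup.map Sum.inr (killg S.toRight z) := by
  have h : (killg S).comp (FreeGroup.map Sum.inr)
      = (FreeGroup.map (Sum.inr : β → α ⊕ β)).comp (killg S.toRight) := by
    apply FreeGroup.ext_hom; intro a
    simp [apply_ite, FreeGroup.map.of]
  exact DFunLike.congr_fun h z

lemma killg_map_equiv (e : α ≃ β) (S : Finset β) (z : FreeGroup α) :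
    killg S (FreeGroup.map e z)
      = FreeGroup.map e (killg (S.map e.symm.toEmbedding) z) := by
  have h : (killg S).comp (FreeGroup.map (e : α → β))
      = (FreeGroup.map (e : α → β)).comp (killg (S.map e.symm.toEmbedding)) := by
    apply FreeGroup.ext_hom; intro a
    simp [apply_ite, FreeGroup.map.of, Finset.mem_map_equiv]
  exact DFunLike.congr_fun h z

/-- A pair of a 1-out-of-α and a 2-out-of-α picture hanging solution. -/
structure Pack (α : Type*) [DecidableEq α] where
  g : FreeGroup α
  h : FreeGroup α
  g1 : ∀ S : Finset α, S.Nonempty → killg S g = 1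
  g_ne : g ≠ 1
  h1 : ∀ S : Finset α, 2 ≤ S.card → killg S h = 1
  h2 : ∀ S : Finset α, S.card ≤ 1 → killg S h ≠ 1

lemma hg_ne_one [Nonempty α] (P : Pack α) : P.h * P.g ≠ 1 := by
  obtain ⟨a⟩ := ‹Nonempty α›
  intro hcontr
  apply P.h2 {a} (by simp)
  have h0 : killg {a} (P.h * P.g) = 1 := by rw [hcontr]; simp
  rwa [_root_.map_mul, P.g1 {a} ⟨a, Finset.mem_singleton_self a⟩, mul_one] at h0

section Dbl

variable [Nonempty α] [Nonempty β]

/-- Left inclusion. -/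
abbrev Ai : FreeGroup α →* FreeGroup (α ⊕ β) := FreeGroup.map Sum.inl

/-- Right inclusion. -/
abbrev Bi : FreeGroup β →* FreeGroup (α ⊕ β) := FreeGroup.map Sum.inr

/-- The doubled 1-out solution. -/
def dblg (P : Pack α) (Q : Pack β) : FreeGroup (α ⊕ β) :=
  Ai P.g * Bi Q.g * (Ai P.g)⁻¹ * (Bi Q.g)⁻¹

/-- The doubled 2-out solution. -/
def dblh (P : Pack α) (Q : Pack β) : FreeGroup (α ⊕ β) :=
  Ai (P.h * P.g) * Bi Q.g * (Ai (P.h * P.g))⁻¹ * (Bi Q.g)⁻¹ *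
    Ai P.g * Bi (Q.h * Q.g) * (Ai P.g)⁻¹ * (Bi (Q.h * Q.g))⁻¹

/-- Doubling a pack. -/
def dbl (P : Pack α) (Q : Pack β) : Pack (α ⊕ β) where
  g := dblg P Q
  h := dblh P Q
  g1 := by
    intro S hS
    obtain ⟨s, hs⟩ := hS
    rcases s with a | b
    · simp only [dblg, _root_.map_mul, _root_.map_inv, killg_map_inl, killg_map_inr,
        P.g1 S.toLeft ⟨a, Finset.mem_toLeft.mpr hs⟩, _root_.map_one]
      group
    · simp only [dblg, _root_.map_mul, _root_.map_inv, killg_map_inl, killg_map_inr,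
        Q.g1 S.toRight ⟨b, Finset.mem_toRight.mpr hs⟩, _root_.map_one]
      group
  g_ne := by
    have h1 := PL_inl (β := β) P.g_ne
    have h2 := PR_inr (α := α) Q.g_ne
    have h3 := PL_inl (β := β) (inv_ne_one.mpr P.g_ne)
    have h4 := PR_inr (α := α) (inv_ne_one.mpr Q.g_ne)
    rw [_root_.map_inv] at h3 h4
    exact alt4 h1 h2 h3 h4
  h1 := by
    intro S hS
    have hcard := Finset.card_toLeft_add_card_toRight (u := S)
    by_cases hA : 2 ≤ S.toLeft.card
    · simp only [dblh, _root_.map_mul, _root_.map_inv, killg_map_inl, killg_map_inr,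
        P.h1 S.toLeft hA, P.g1 S.toLeft (Finset.card_pos.mp (by omega)), _root_.map_one]
      group
    · by_cases hB : 2 ≤ S.toRight.card
      · simp only [dblh, _root_.map_mul, _root_.map_inv, killg_map_inl, killg_map_inr,
          Q.h1 S.toRight hB, Q.g1 S.toRight (Finset.card_pos.mp (by omega)), _root_.map_one]
        group
      · have hA1 : S.toLeft.Nonempty := Finset.card_pos.mp (by omega)
        have hB1 : S.toRight.Nonempty := Finset.card_pos.mp (by omega)
        simp only [dblh, _root_.map_mul, _root_.map_inv, killg_map_inl, killg_map_inr,
          P.g1 S.toLeft hA1, Q.g1 S.toRight hB1, _root_.map_one]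
        group
  h2 := by
    intro S hS
    have hcard := Finset.card_toLeft_add_card_toRight (u := S)
    by_cases hA : S.toLeft.card = 0
    · by_cases hB : S.toRight.card = 0
      · -- S = ∅
        have hSe : S = ∅ := Finset.card_eq_zero.mp (by omega)
        subst hSe
        rw [killg_empty]
        have c1 := PL_inl (β := β) (hg_ne_one P)
        have c2 := PR_inr (α := α) Q.g_ne
        have c3 := PL_inl (β := β) (inv_ne_one.mpr (hg_ne_one P))
        have c4 := PR_inr (α := α) (inv_ne_one.mpr Q.g_ne)
        have c5 := PL_inl (β := β) P.g_ne
        have c6 := PR_inr (α := α) (hg_ne_one Q)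
        have c7 := PL_inl (β := β) (inv_ne_one.mpr P.g_ne)
        have c8 := PR_inr (α := α) (inv_ne_one.mpr (hg_ne_one Q))
        rw [_root_.map_inv] at c3 c4 c7 c8
        exact alt8 c1 c2 c3 c4 c5 c6 c7 c8
      · -- only the right part of S is nonempty (a singleton)
        have hBe : S.toRight.Nonempty := Finset.card_pos.mp (by omega)
        have hAe : S.toLeft = ∅ := Finset.card_eq_zero.mp hA
        have hqh : killg S.toRight Q.h ≠ 1 := Q.h2 S.toRight (by omega)
        have key : killg S (dblh P Q)
            = Ai P.g * Bi (killg S.toRight Q.h) * (Ai P.g)⁻¹ *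
              (Bi (killg S.toRight Q.h))⁻¹ := by
          simp only [dblh, _root_.map_mul, _root_.map_inv, killg_map_inl, killg_map_inr,
            hAe, killg_empty, Q.g1 S.toRight hBe, _root_.map_one]
          group
        rw [key]
        have c1 := PL_inl (β := β) P.g_ne
        have c2 := PR_inr (α := α) hqh
        have c3 := PL_inl (β := β) (inv_ne_one.mpr P.g_ne)
        have c4 := PR_inr (α := α) (inv_ne_one.mpr hqh)
        rw [_root_.map_inv] at c3 c4
        exact alt4 c1 c2 c3 c4
    · -- the left part of S is nonempty (a singleton), the right part is empty
      have hAe : S.toLeft.Nonempty := Finset.card_pos.mp (by omega)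
      have hBe : S.toRight = ∅ := Finset.card_eq_zero.mp (by omega)
      have hph : killg S.toLeft P.h ≠ 1 := P.h2 S.toLeft (by omega)
      have key : killg S (dblh P Q)
          = Ai (killg S.toLeft P.h) * Bi Q.g * (Ai (killg S.toLeft P.h))⁻¹ *
            (Bi Q.g)⁻¹ := by
        simp only [dblh, _root_.map_mul, _root_.map_inv, killg_map_inl, killg_map_inr,
          hBe, killg_empty, P.g1 S.toLeft hAe, _root_.map_one]
        group
      rw [key]
      have c1 := PL_inl (β := β) hph
      have c2 := PR_inr (α := α) Q.g_ne
      have c3 := PL_inl (β := β) (inv_ne_one.mpr hph)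
      have c4 := PR_inr (α := α) (inv_ne_one.mpr Q.g_ne)
      rw [_root_.map_inv] at c3 c4
      exact alt4 c1 c2 c3 c4

lemma norm_Ai (z : FreeGroup α) : ((Ai z : FreeGroup (α ⊕ β))).norm = z.norm :=
  norm_map Sum.inl_injective z

lemma norm_Bi (z : FreeGroup β) : ((Bi z : FreeGroup (α ⊕ β))).norm = z.norm :=
  norm_map Sum.inr_injective z

lemma norm_dblg_le (P : Pack α) (Q : Pack β) :
    (dblg P Q).norm ≤ 2 * P.g.norm + 2 * Q.g.norm := by
  unfold dblg
  have h1 := FreeGroup.norm_mul_le (Ai P.g * Bi Q.g * (Ai P.g)⁻¹ : FreeGroup (α ⊕ β)) (Bi Q.g)⁻¹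
  have h2 := FreeGroup.norm_mul_le (Ai P.g * Bi Q.g : FreeGroup (α ⊕ β)) (Ai P.g)⁻¹
  have h3 := FreeGroup.norm_mul_le (Ai P.g : FreeGroup (α ⊕ β)) (Bi Q.g)
  simp only [FreeGroup.norm_inv_eq, norm_Ai, norm_Bi] at h1 h2 h3
  omega

lemma norm_dblh_le (P : Pack α) (Q : Pack β) :
    (dblh P Q).norm ≤ 2 * P.h.norm + 2 * Q.h.norm + 4 * P.g.norm + 4 * Q.g.norm := by
  unfold dblh
  have e1 : (P.h * P.g).norm ≤ P.h.norm + P.g.norm := FreeGroup.norm_mul_le _ _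
  have e2 : (Q.h * Q.g).norm ≤ Q.h.norm + Q.g.norm := FreeGroup.norm_mul_le _ _
  have h1 := FreeGroup.norm_mul_le
    (Ai (P.h * P.g) * Bi Q.g * (Ai (P.h * P.g))⁻¹ * (Bi Q.g)⁻¹ * Ai P.g * Bi (Q.h * Q.g) *
      (Ai P.g)⁻¹ : FreeGroup (α ⊕ β)) (Bi (Q.h * Q.g))⁻¹
  have h2 := FreeGroup.norm_mul_le
    (Ai (P.h * P.g) * Bi Q.g * (Ai (P.h * P.g))⁻¹ * (Bi Q.g)⁻¹ * Ai P.g * Bi (Q.h * Q.g) :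
      FreeGroup (α ⊕ β)) (Ai P.g)⁻¹
  have h3 := FreeGroup.norm_mul_le
    (Ai (P.h * P.g) * Bi Q.g * (Ai (P.h * P.g))⁻¹ * (Bi Q.g)⁻¹ * Ai P.g : FreeGroup (α ⊕ β))
    (Bi (Q.h * Q.g))
  have h4 := FreeGroup.norm_mul_le
    (Ai (P.h * P.g) * Bi Q.g * (Ai (P.h * P.g))⁻¹ * (Bi Q.g)⁻¹ : FreeGroup (α ⊕ β)) (Ai P.g)
  have h5 := FreeGroup.norm_mul_le
    (Ai (P.h * P.g) * Bi Q.g * (Ai (P.h * P.g))⁻¹ : FreeGroup (α ⊕ β)) (Bi Q.g)⁻¹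
  have h6 := FreeGroup.norm_mul_le
    (Ai (P.h * P.g) * Bi Q.g : FreeGroup (α ⊕ β)) (Ai (P.h * P.g))⁻¹
  have h7 := FreeGroup.norm_mul_le (Ai (P.h * P.g) : FreeGroup (α ⊕ β)) (Bi Q.g)
  simp only [FreeGroup.norm_inv_eq, norm_Ai, norm_Bi] at h1 h2 h3 h4 h5 h6 h7
  omega

end Dbl

/-- Transporting a pack along an equivalence of index types. -/
def packCongr (e : α ≃ β) (P : Pack α) : Pack β where
  g := FreeGroup.map e P.g
  h := FreeGroup.map e P.h
  g1 := by
    intro S hS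
    rw [killg_map_equiv, P.g1 _ (hS.map), _root_.map_one]
  g_ne := map_ne_one e.injective P.g_ne
  h1 := by
    intro S hS
    rw [killg_map_equiv, P.h1 _ (by rwa [Finset.card_map]), _root_.map_one]
  h2 := by
    intro S hS
    rw [killg_map_equiv]
    exact map_ne_one e.injective (P.h2 _ (by rwa [Finset.card_map]))

@[simp] lemma packCongr_g (e : α ≃ β) (P : Pack α) :
    (packCongr e P).g = FreeGroup.map e P.g := rfl

@[simp] lemma packCongr_h (e : α ≃ β) (P : Pack α) :
    (packCongr e P).h = FreeGroup.map e P.h := rfl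

/-! ### Evaluating `killg` on explicit words -/

lemma mk_singleton_eq (a : α) (b : Bool) :
    FreeGroup.mk [(a, b)] = if b then FreeGroup.of a else (FreeGroup.of a)⁻¹ := by
  cases b
  · have h : (FreeGroup.of a)⁻¹ = FreeGroup.mk (FreeGroup.invRev [(a, true)]) := by
      rw [← FreeGroup.inv_mk]; rfl
    rw [h]; rfl
  · rfl

lemma killg_mk (S : Finset α) (L : List (α × Bool)) :
    killg S (FreeGroup.mk L) = FreeGroup.mk (L.filter fun p => decide (p.1 ∉ S)) := by
  induction L with
  | nil => rw [← FreeGroup.one_eq_mk, _root_.map_one, List.filter_nil, FreeGroup.one_eq_mk]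
  | cons x t ih =>
    have hx : FreeGroup.mk (x :: t) = FreeGroup.mk [x] * FreeGroup.mk t := by
      rw [FreeGroup.mul_mk]; rfl
    rcases x with ⟨a, b⟩
    have hone : killg S (FreeGroup.mk [(a, b)])
        = if a ∈ S then 1 else FreeGroup.mk [(a, b)] := by
      rw [mk_singleton_eq]
      by_cases hmem : a ∈ S <;> cases b <;> simp [hmem, _root_.map_inv]
    rw [hx, _root_.map_mul, ih, hone]
    by_cases hmem : a ∈ S
    · rw [if_pos hmem, one_mul, List.filter_cons]
      simp [hmem]
    · rw [if_neg hmem, FreeGroup.mul_mk, List.filter_cons]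
      simp [hmem]

/-! ### The base pack on four nails -/

/-- The word `p q p⁻¹ q⁻¹` where `p = [x₀,x₁]`, `q = [x₂,x₃]`. -/
def glist : List (Fin 4 × Bool) :=
  [(0,true),(1,true),(0,false),(1,false), (2,true),(3,true),(2,false),(3,false),
   (1,true),(0,true),(1,false),(0,false), (3,true),(2,true),(3,false),(2,false)]

/-- The word `u p v p⁻¹ v⁻¹ q u⁻¹ q⁻¹` where `u = x₀x₁`, `p = [x₀,x₁]`,
`v = x₂x₃`, `q = [x₂,x₃]`. -/
def wlist : List (Fin 4 × Bool) :=
  [(0,true),(1,true),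
   (0,true),(1,true),(0,false),(1,false),
   (2,true),(3,true),
   (1,true),(0,true),(1,false),(0,false),
   (3,false),(2,false),
   (2,true),(3,true),(2,false),(3,false),
   (1,false),(0,false),
   (3,true),(2,true),(3,false),(2,false)]

def g4 : FreeGroup (Fin 4) := FreeGroup.mk glist

def w4 : FreeGroup (Fin 4) := FreeGroup.mk wlist

def basePack : Pack (Fin 4) where
  g := g4
  h := w4
  g1 := by
    intro S hS
    rw [show g4 = FreeGroup.mk glist from rfl, killg_mk]
    revert S
    have : ∀ S : Finset (Fin 4), S.Nonempty →
        FreeGroup.mk (glist.filter fun p => decide (p.1 ∉ S)) = 1 := by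
      intro S hS
      rw [← Finset.card_pos] at hS
      revert S
      decide
    exact this
  g_ne := by decide
  h1 := by
    intro S hS
    rw [show w4 = FreeGroup.mk wlist from rfl, killg_mk]
    revert S
    decide
  h2 := by
    intro S hS
    rw [show w4 = FreeGroup.mk wlist from rfl, killg_mk]
    revert S
    decide

lemma norm_g4 : g4.norm ≤ 16 := by decide

lemma norm_w4 : w4.norm ≤ 24 := by decide

/-! ### Arithmetic helpers -/

lemma pow_aux' : ∀ m, 3 * 4 ^ (m + 2) ≤ 2 * 6 ^ (m + 2) := by
  intro m
  induction m with
  | zero => norm_num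
  | succ n ih =>
    have e4 : (4:ℕ) ^ (n + 1 + 2) = 4 * 4 ^ (n + 2) := by ring
    have e6 : (6:ℕ) ^ (n + 1 + 2) = 6 * 6 ^ (n + 2) := by ring
    rw [e4, e6]
    calc 3 * (4 * 4 ^ (n + 2)) = 4 * (3 * 4 ^ (n + 2)) := by ring
      _ ≤ 4 * (2 * 6 ^ (n + 2)) := Nat.mul_le_mul_left _ ih
      _ ≤ 2 * (6 * 6 ^ (n + 2)) := by nlinarith [Nat.zero_le (6 ^ (n + 2))]

lemma pow_aux (k : ℕ) (hk : 2 ≤ k) : 3 * 4 ^ k ≤ 2 * 6 ^ k := by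
  obtain ⟨m, rfl⟩ : ∃ m, k = m + 2 := ⟨k - 2, by omega⟩
  exact pow_aux' m

/-! ### The main induction -/

lemma exists_pack : ∀ i, 2 ≤ i → ∃ P : Pack (Fin (2 ^ i)),
    FreeGroup.norm P.g ≤ 4 ^ i ∧ 3 * FreeGroup.norm P.h ≤ 8 * 6 ^ i - 12 * 4 ^ i := by
  intro i hi
  induction i, hi using Nat.le_induction with
  | base =>
    refine ⟨packCongr (finCongr (by norm_num)) basePack, ?_, ?_⟩
    · rw [packCongr_g, norm_map (finCongr _).injective]
      calc g4.norm ≤ 16 := norm_g4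
        _ ≤ 4 ^ 2 := by norm_num
    · rw [packCongr_h, norm_map (finCongr _).injective]
      calc 3 * w4.norm ≤ 3 * 24 := by have := norm_w4; omega
        _ ≤ 8 * 6 ^ 2 - 12 * 4 ^ 2 := by norm_num
  | succ k hk ih =>
    obtain ⟨P, hg, hh⟩ := ih
    have hsum : 2 ^ k + 2 ^ k = 2 ^ (k + 1) := by rw [pow_succ]; ring
    set e : (Fin (2 ^ k) ⊕ Fin (2 ^ k)) ≃ Fin (2 ^ (k + 1)) :=
      finSumFinEquiv.trans (finCongr hsum) with he
    have hne : Nonempty (Fin (2 ^ k)) := ⟨⟨0, Nat.pow_pos (n := k) (by norm_num)⟩⟩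
    refine ⟨packCongr e (dbl P P), ?_, ?_⟩
    · rw [packCongr_g, norm_map e.injective]
      have h1 : (dbl P P).g = dblg P P := rfl
      rw [h1]
      have h2 := norm_dblg_le P P
      have : (4 : ℕ) ^ (k + 1) = 4 * 4 ^ k := by rw [pow_succ]; ring
      omega
    · rw [packCongr_h, norm_map e.injective]
      have h1 : (dbl P P).h = dblh P P := rfl
      rw [h1]
      have h2 := norm_dblh_le P P
      have h3 := pow_aux k hk
      have e4 : (4 : ℕ) ^ (k + 1) = 4 * 4 ^ k := by rw [pow_succ]; ring
      have e6 : (6 : ℕ) ^ (k + 1) = 6 * 6 ^ k := by rw [pow_succ]; ring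
      omega

end PictureHang

theorem two_out_of_n_short_solution (i : ℕ) (hi : 2 ≤ i) :
    ∃ w : FreeGroup (Fin (2 ^ i)), IsSolution 2 w ∧
      3 * FreeGroup.norm w ≤ 8 * 6 ^ i - 12 * 4 ^ i := by
  obtain ⟨P, -, hh⟩ := PictureHang.exists_pack i hi
  refine ⟨P.h, ?_, hh⟩
  intro S
  have hk : kill S = PictureHang.killg S := rfl
  constructor
  · intro h2
    rw [hk]
    exact P.h1 S h2
  · intro hlt
    rw [hk]
    exact P.h2 S (by omega)
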